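/- Let V be a finite-dimensional real inner product space and g ⊆ so(V) a Lie subalgebra. Let T : V × V → V and R : V × V → g be alternating bilinear maps satisfying: (i) g-invariance: A(T(X,Y)) = T(AX,Y) + T(X,AY) and [A, R(X,Y)] = R(AX,Y) + R(X,AY) for all A ∈ g and X,Y ∈ V; (ii) the first Bianchi identity: R(X,Y)Z + R(Y,Z)X + R(Z,X)Y + T(T(X,Y),Z) + T(T(Y,Z),X) + T(T(Z,X),Y) = 0 for all X,Y,Z ∈ V; (iii) the second Bianchi identity: R(T(X,Y),Z) + R(T(Y,Z),X) + R(T(Z,X),Y) = 0 for all X,Y,Z ∈ V. Then the bracket on the vector space h := g ⊕ V defined by [(A,X),(B,Y)] := ([A,B] + R(X,Y), AY − BX − T(X,Y)) satisfies the Jacobi identity, so h is a Lie algebra containing g as a subalgebra. -/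

import Mathlib

open scoped RealInnerProductSpace

attribute [local instance 100] LieRing.ofAssociativeRing

noncomputable section

/-- The bracket of the infinitesimal model on `h = g ⊕ V` built from a curvature `R`
and a torsion `T`:
`[(A,X),(B,Y)] = ([A,B] + R(X,Y), AY − BX − T(X,Y))`. -/
def modelBracket {V : Type*} [NormedAddCommGroup V] [InnerProductSpace ℝ V]
    (R : V →ₗ[ℝ] V →ₗ[ℝ] Module.End ℝ V) (T : V →ₗ[ℝ] V →ₗ[ℝ] V) :
    (Module.End ℝ V × V) → (Module.End ℝ V × V) → (Module.End ℝ V × V) :=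
  fun p q => (⁅p.1, q.1⁆ + R p.2 q.2, p.1 q.2 - q.1 p.2 - T p.2 q.2)

/-- Given `g`-invariant alternating maps `T : V × V → V` and `R : V × V → g`
satisfying the first and second Bianchi identities, the bracket on `h = g ⊕ V`
closes on `g ⊕ V` and satisfies the Jacobi identity, so `h` is a Lie algebra
containing `g` as a subalgebra. -/
theorem infinitesimal_model_jacobi
    {V : Type*} [NormedAddCommGroup V] [InnerProductSpace ℝ V] [FiniteDimensional ℝ V]
    (g : LieSubalgebra ℝ (Module.End ℝ V))
    (hskew : ∀ A ∈ g, ∀ x y : V, ⟪A x, y⟫ = -⟪x, A y⟫)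
    (T : V →ₗ[ℝ] V →ₗ[ℝ] V) (R : V →ₗ[ℝ] V →ₗ[ℝ] Module.End ℝ V)
    (hTalt : ∀ X : V, T X X = 0)
    (hRalt : ∀ X : V, R X X = 0)
    (hRg : ∀ X Y : V, R X Y ∈ g)
    (hTinvt : ∀ A ∈ g, ∀ X Y : V, A (T X Y) = T (A X) Y + T X (A Y))
    (hRinvt : ∀ A ∈ g, ∀ X Y : V, ⁅A, R X Y⁆ = R (A X) Y + R X (A Y))
    (hB1 : ∀ X Y Z : V,
      R X Y Z + R Y Z X + R Z X Y + T (T X Y) Z + T (T Y Z) X + T (T Z X) Y = 0)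
    (hB2 : ∀ X Y Z : V, R (T X Y) Z + R (T Y Z) X + R (T Z X) Y = 0) :
    (∀ A ∈ g, ∀ B ∈ g, ∀ X Y : V, (modelBracket R T (A, X) (B, Y)).1 ∈ g) ∧
    (∀ A ∈ g, ∀ B ∈ g, ∀ C ∈ g, ∀ X Y Z : V,
      modelBracket R T (modelBracket R T (A, X) (B, Y)) (C, Z) +
      modelBracket R T (modelBracket R T (B, Y) (C, Z)) (A, X) +
      modelBracket R T (modelBracket R T (C, Z) (A, X)) (B, Y) = 0) := by
  -- antisymmetry of T and R
  have hT : ∀ X Y : V, T Y X = - T X Y := by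
    intro X Y
    have h := hTalt (X + Y)
    simp only [map_add, LinearMap.add_apply, hTalt, zero_add, add_zero] at h
    linear_combination (norm := abel) h
  have hR : ∀ X Y : V, R Y X = - R X Y := by
    intro X Y
    have h := hRalt (X + Y)
    simp only [map_add, LinearMap.add_apply, hRalt, zero_add, add_zero] at h
    linear_combination (norm := abel) h
  constructor
  · intro A hA B hB X Y
    exact g.add_mem (g.lie_mem hA hB) (hRg X Y)
  · intro A hA B hB C hC X Y Z
    have eC : ⁅R X Y, C⁆ = - R (C X) Y - R X (C Y) := by
      rw [← lie_skew, hRinvt C hC]; abel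
    have eA : ⁅R Y Z, A⁆ = - R (A Y) Z - R Y (A Z) := by
      rw [← lie_skew, hRinvt A hA]; abel
    have eB : ⁅R Z X, B⁆ = - R (B Z) X - R Z (B X) := by
      rw [← lie_skew, hRinvt B hB]; abel
    refine Prod.ext ?_ ?_
    · -- first (Lie algebra) component
      show ⁅⁅A,B⁆ + R X Y, C⁆ + R (A Y - B X - T X Y) Z
          + (⁅⁅B,C⁆ + R Y Z, A⁆ + R (B Z - C Y - T Y Z) X)
          + (⁅⁅C,A⁆ + R Z X, B⁆ + R (C X - A Z - T Z X) Y) = 0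
      have jac : ⁅⁅A,B⁆, C⁆ + ⁅⁅B,C⁆, A⁆ + ⁅⁅C,A⁆, B⁆ = 0 := by
        simp only [Ring.lie_def]; noncomm_ring
      have b2 := hB2 X Y Z
      simp only [add_lie, map_sub, LinearMap.sub_apply, eC, eA, eB,
        hR (C Y) X, hR (A Z) Y, hR (B X) Z]
      -- now everything should be a ℤ-linear combination
      linear_combination (norm := abel) jac - b2
    · -- second (vector) component
      show (⁅A,B⁆ + R X Y) Z - C (A Y - B X - T X Y) - T (A Y - B X - T X Y) Z
          + ((⁅B,C⁆ + R Y Z) X - A (B Z - C Y - T Y Z) - T (B Z - C Y - T Y Z) X)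
          + ((⁅C,A⁆ + R Z X) Y - B (C X - A Z - T Z X) - T (C X - A Z - T Z X) Y) = 0
      have tC : C (T X Y) = T (C X) Y + T X (C Y) := hTinvt C hC X Y
      have tA : A (T Y Z) = T (A Y) Z + T Y (A Z) := hTinvt A hA Y Z
      have tB : B (T Z X) = T (B Z) X + T Z (B X) := hTinvt B hB Z X
      have b1 := hB1 X Y Z
      simp only [LinearMap.add_apply, Ring.lie_def, LinearMap.sub_apply,
        Module.End.mul_apply, map_sub, map_add, tC, tA, tB,
        hT (C Y) X, hT (A Z) Y, hT (B X) Z]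
      linear_combination (norm := abel) b1

end
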